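/- On a Polish space X, the KL divergence KL(μ‖ν) is lower semi-continuous in the pair (μ,ν) with respect to weak convergence: if μ_n → μ and ν_n → ν weakly, then liminf_{n→∞} KL(μ_n‖ν_n) ≥ KL(μ‖ν). -/

import Mathlib

open MeasureTheory Real ENNReal Filter Topology
open scoped Classical

noncomputable def klDiv {X : Type*} [MeasurableSpace X] (μ ν : Measure X) : EReal :=
  if μ ≪ ν ∧ Integrable (fun x => Real.log (μ.rnDeriv ν x).toReal) μ
  then ((∫ x, Real.log (μ.rnDeriv ν x).toReal ∂μ : ℝ) : EReal)
  else ⊤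

noncomputable def tvDist {X : Type*} [MeasurableSpace X] (μ ν : Measure X) : ℝ :=
  ⨆ A : {A : Set X // MeasurableSet A}, |(μ A).toReal - (ν A).toReal|

open scoped BoundedContinuousFunction

namespace KLAux

variable {X : Type*} [MeasurableSpace X]

lemma integral_llr_nonneg {μ ν : Measure X} [IsProbabilityMeasure μ] [IsProbabilityMeasure ν]
    (h : μ ≪ ν) (hint : Integrable (llr μ ν) μ) : 0 ≤ ∫ x, llr μ ν x ∂μ := by
  set r : X → ℝ := fun x => (μ.rnDeriv ν x).toReal with hr
  have h1 : ∫ x, llr μ ν x ∂μ = ∫ x, r x • llr μ ν x ∂ν :=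
    (MeasureTheory.integral_rnDeriv_smul h).symm
  have hint' : Integrable (fun x => r x • llr μ ν x) ν :=
    (MeasureTheory.integrable_rnDeriv_smul_iff h).mpr hint
  have hint2 : Integrable (fun x => r x - 1) ν :=
    Measure.integrable_toReal_rnDeriv.sub (integrable_const 1)
  have hpt : ∀ x, r x - 1 ≤ r x • llr μ ν x := by
    intro x
    have hr0 : 0 ≤ r x := ENNReal.toReal_nonneg
    rcases eq_or_lt_of_le hr0 with h0 | h0
    · simp only [smul_eq_mul, ← h0, zero_mul]
      linarith
    · have hlog : Real.log (r x)⁻¹ ≤ (r x)⁻¹ - 1 :=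
        Real.log_le_sub_one_of_pos (by positivity)
      rw [Real.log_inv] at hlog
      have : llr μ ν x = Real.log (r x) := rfl
      rw [this, smul_eq_mul]
      nlinarith [mul_le_mul_of_nonneg_left hlog hr0, mul_inv_cancel₀ h0.ne']
  have h2 : ∫ x, (r x - 1) ∂ν ≤ ∫ x, r x • llr μ ν x ∂ν :=
    integral_mono hint2 hint' hpt
  have h3 : ∫ x, (r x - 1) ∂ν = 0 := by
    rw [integral_sub Measure.integrable_toReal_rnDeriv (integrable_const 1),
      Measure.integral_toReal_rnDeriv h]
    simp
  rw [h1]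
  linarith

lemma integrable_of_bounded {μ : Measure X} [IsFiniteMeasure μ] {f : X → ℝ} {M : ℝ}
    (hf : Measurable f) (hM : ∀ x, ‖f x‖ ≤ M) : Integrable f μ :=
  Integrable.mono' (integrable_const M) hf.aestronglyMeasurable (ae_of_all _ hM)

lemma integrable_exp_of_bounded {μ : Measure X} [IsFiniteMeasure μ] {f : X → ℝ} {M : ℝ}
    (hf : Measurable f) (hM : ∀ x, |f x| ≤ M) :
    Integrable (fun x => Real.exp (f x)) μ := by
  refine integrable_of_bounded (Real.measurable_exp.comp hf) (M := Real.exp M) (fun x => ?_)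
  rw [Real.norm_eq_abs, abs_of_pos (Real.exp_pos _)]
  exact Real.exp_le_exp.mpr ((abs_le.mp (hM x)).2)

lemma gibbs {μ ν : Measure X} [IsProbabilityMeasure μ] [IsProbabilityMeasure ν]
    (h : μ ≪ ν) (hint : Integrable (llr μ ν) μ) {f : X → ℝ} (hf : Measurable f)
    {M : ℝ} (hM : ∀ x, |f x| ≤ M) :
    ∫ x, f x ∂μ - Real.log (∫ x, Real.exp (f x) ∂ν) ≤ ∫ x, llr μ ν x ∂μ := by
  have hfμ : Integrable f μ := integrable_of_bounded hf hM
  have hfν : Integrable (fun x => Real.exp (f x)) ν := integrable_exp_of_bounded hf hM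
  have hprob : IsProbabilityMeasure (ν.tilted f) := isProbabilityMeasure_tilted hfν
  have hac : μ ≪ ν.tilted f := h.trans (absolutelyContinuous_tilted hfν)
  have hint2 : Integrable (llr μ (ν.tilted f)) μ := integrable_llr_tilted_right h hfμ hint hfν
  have h0 : 0 ≤ ∫ x, llr μ (ν.tilted f) x ∂μ := integral_llr_nonneg hac hint2
  rw [integral_llr_tilted_right h hfμ hfν hint] at h0
  linarith

lemma ac_of_bounded {μ ν : Measure X} [IsProbabilityMeasure μ] [IsProbabilityMeasure ν] {c : ℝ}
    (hL : ∀ f : X → ℝ, Measurable f → (∃ M, ∀ x, |f x| ≤ M) →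
      ∫ x, f x ∂μ - Real.log (∫ x, Real.exp (f x) ∂ν) ≤ c) : μ ≪ ν := by
  refine Measure.AbsolutelyContinuous.mk (fun s hs hνs => ?_)
  by_contra hμs
  have hpos : 0 < (μ s).toReal := ENNReal.toReal_pos hμs (measure_ne_top μ s)
  set t : ℝ := (c + 1) / (μ s).toReal with ht
  have hkey := hL (s.indicator (fun _ => t)) (measurable_const.indicator hs) ⟨|t|, fun x => ?_⟩
  · have h1 : ∫ x, s.indicator (fun _ => t) x ∂μ = t * (μ s).toReal := by
      rw [integral_indicator_const _ hs]; simp [mul_comm, measureReal_def]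
    have h2 : (fun x => Real.exp (s.indicator (fun _ => t) x))
        = fun x => s.indicator (fun _ => Real.exp t - 1) x + 1 := by
      funext x
      by_cases hx : x ∈ s <;> simp [Set.indicator_of_mem, Set.indicator_of_notMem, hx]
    have h3 : ∫ x, Real.exp (s.indicator (fun _ => t) x) ∂ν = 1 := by
      rw [h2, integral_add ((integrable_const _).indicator hs) (integrable_const 1),
        integral_indicator_const _ hs]
      simp [hνs, measureReal_def]
    rw [h1, h3, Real.log_one, sub_zero, ht, div_mul_cancel₀ _ hpos.ne'] at hkey
    linarith
  · by_cases hx : x ∈ s <;> simp [Set.indicator_of_mem, Set.indicator_of_notMem, hx, abs_nonneg]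

lemma converse {μ ν : Measure X} [IsProbabilityMeasure μ] [IsProbabilityMeasure ν] {c : ℝ}
    (hL : ∀ f : X → ℝ, Measurable f → (∃ M, ∀ x, |f x| ≤ M) →
      ∫ x, f x ∂μ - Real.log (∫ x, Real.exp (f x) ∂ν) ≤ c) :
    μ ≪ ν ∧ Integrable (llr μ ν) μ ∧ ∫ x, llr μ ν x ∂μ ≤ c := by
  have h : μ ≪ ν := ac_of_bounded hL
  set r : X → ℝ := fun x => (μ.rnDeriv ν x).toReal with hrdef
  have hrmeas : Measurable r := (Measure.measurable_rnDeriv μ ν).ennreal_toReal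
  have hr0 : ∀ x, 0 ≤ r x := fun x => ENNReal.toReal_nonneg
  set g : X → ℝ := llr μ ν with hgdef
  have hgmeas : Measurable g := measurable_llr μ ν
  have hgr : ∀ x, g x = Real.log (r x) := fun x => rfl
  -- negative part of llr is integrable
  have hφν : Integrable (fun x => r x • min (g x) 0) ν := by
    refine integrable_of_bounded (hrmeas.smul (hgmeas.min measurable_const)) (M := 1) (fun x => ?_)
    rcases eq_or_lt_of_le (hr0 x) with h0 | h0
    · simp [← h0]
    · rcases le_or_gt 1 (r x) with h1 | h1
      · have : 0 ≤ Real.log (r x) := Real.log_nonneg h1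
        simp [hgr, min_eq_right this, abs_nonneg]
      · have hlog : Real.log (r x)⁻¹ ≤ (r x)⁻¹ - 1 :=
          Real.log_le_sub_one_of_pos (by positivity)
        rw [Real.log_inv] at hlog
        have hlneg : Real.log (r x) ≤ 0 := Real.log_nonpos (hr0 x) h1.le
        rw [smul_eq_mul, hgr, min_eq_left hlneg, Real.norm_eq_abs, abs_mul, abs_of_pos h0,
          abs_of_nonpos hlneg]
        nlinarith [mul_le_mul_of_nonneg_left hlog (hr0 x), mul_inv_cancel₀ h0.ne']
  have hφ : Integrable (fun x => min (g x) 0) μ :=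
    (integrable_rnDeriv_smul_iff h).mp hφν
  have hrν : Integrable r ν := Measure.integrable_toReal_rnDeriv
  have hint_r : ∫ x, r x ∂ν = 1 := by
    rw [Measure.integral_toReal_rnDeriv h]; simp
  -- the truncations
  set F : ℕ → X → ℝ := fun n x => if μ.rnDeriv ν x = 0 then -(n:ℝ)
    else max (min (g x) n) (-(n:ℝ)) with hFdef
  have hFmeas : ∀ n, Measurable (F n) := fun n =>
    Measurable.ite (Measure.measurable_rnDeriv μ ν (measurableSet_singleton 0))
      measurable_const ((hgmeas.min measurable_const).max measurable_const)
  have hFbd : ∀ n x, |F n x| ≤ (n : ℝ) := by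
    intro n x
    have hn : (0:ℝ) ≤ n := Nat.cast_nonneg n
    rw [abs_le, hFdef]
    dsimp only
    split_ifs with hx
    · exact ⟨le_refl _, by linarith⟩
    · exact ⟨le_max_right _ _, max_le (min_le_right _ _) (by linarith)⟩
  have hFμ : ∀ n, F n =ᵐ[μ] (fun x => max (min (g x) n) (-(n:ℝ))) := by
    intro n
    filter_upwards [Measure.rnDeriv_pos h] with x hx
    rw [hFdef]
    simp [hx.ne']
  have hFexp : ∀ n x, Real.exp (F n x) ≤ 1 + r x := by
    intro n x
    rw [hFdef]
    dsimp only
    split_ifs with hx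
    · calc Real.exp (-(n:ℝ)) ≤ Real.exp 0 :=
          Real.exp_le_exp.mpr (neg_nonpos.mpr (Nat.cast_nonneg n))
        _ = 1 := Real.exp_zero
        _ ≤ 1 + r x := by linarith [hr0 x]
    · have h1 : max (min (g x) n) (-(n:ℝ)) ≤ max (g x) 0 := by
        refine max_le (le_trans (min_le_left _ _) (le_max_left _ _)) ?_
        exact le_trans (neg_nonpos.mpr (Nat.cast_nonneg n)) (le_max_right _ _)
      refine le_trans (Real.exp_le_exp.mpr h1) ?_
      rcases eq_or_lt_of_le (hr0 x) with h0 | h0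
      · have hg0 : g x = 0 := by rw [hgr, ← h0, Real.log_zero]
        rw [hg0, max_self, Real.exp_zero]
        linarith [hr0 x]
      · rcases le_total (g x) 0 with hgx | hgx
        · rw [max_eq_right hgx, Real.exp_zero]; linarith
        · rw [max_eq_left hgx, hgr, Real.exp_log h0]; linarith
  have hFexp_int : ∀ n, Integrable (fun x => Real.exp (F n x)) ν := by
    intro n
    refine integrable_of_bounded (Real.measurable_exp.comp (hFmeas n)) (M := Real.exp n) fun x => ?_
    rw [Real.norm_eq_abs, abs_of_pos (Real.exp_pos _)]
    exact Real.exp_le_exp.mpr (abs_le.mp (hFbd n x)).2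
  have hBn : ∀ n : ℕ, ∫ x, F n x ∂μ - Real.log (∫ x, Real.exp (F n x) ∂ν) ≤ c :=
    fun n => hL (F n) (hFmeas n) ⟨n, hFbd n⟩
  -- uniform bound on ∫ min(g⁺, n)
  have hsplit : ∀ (n : ℕ) x, max (min (g x) n) (-(n:ℝ))
      = min (max (g x) 0) n + max (min (g x) 0) (-(n:ℝ)) := by
    intro n x
    have hn : (0:ℝ) ≤ n := Nat.cast_nonneg n
    simp only [min_def, max_def]
    split_ifs <;> linarith
  -- uniform bound on the integral of the positive truncations
  have hintmin : ∀ n : ℕ, Integrable (fun x => min (max (g x) 0) (n:ℝ)) μ := by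
    intro n
    refine integrable_of_bounded ((hgmeas.max measurable_const).min measurable_const)
      (M := n) (fun x => ?_)
    rw [Real.norm_eq_abs, abs_le]
    exact ⟨le_trans (by simp [Nat.cast_nonneg n]) (le_min (le_max_right _ _) (Nat.cast_nonneg n)),
      min_le_right _ _⟩
  have hintmax : ∀ n : ℕ, Integrable (fun x => max (min (g x) 0) (-(n:ℝ))) μ := by
    intro n
    refine integrable_of_bounded ((hgmeas.min measurable_const).max measurable_const)
      (M := n) (fun x => ?_)
    rw [Real.norm_eq_abs, abs_le]
    exact ⟨le_max_right _ _, max_le (le_trans (min_le_right _ _) (Nat.cast_nonneg n))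
      (by simp [Nat.cast_nonneg n])⟩
  have hbound_n : ∀ n : ℕ, ∫ x, min (max (g x) 0) (n:ℝ) ∂μ
      ≤ c + Real.log 2 - ∫ x, min (g x) 0 ∂μ := by
    intro n
    have he : ∫ x, Real.exp (F n x) ∂ν ≤ 2 := by
      calc ∫ x, Real.exp (F n x) ∂ν ≤ ∫ x, (1 + r x) ∂ν :=
            integral_mono (hFexp_int n) ((integrable_const 1).add hrν) (hFexp n)
        _ = 2 := by rw [integral_add (integrable_const 1) hrν, hint_r]; norm_num [measure_univ]
    have hlog2 : Real.log (∫ x, Real.exp (F n x) ∂ν) ≤ Real.log 2 :=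
      Real.log_le_log (integral_exp_pos (hFexp_int n)) he
    have h1 : ∫ x, F n x ∂μ = ∫ x, max (min (g x) n) (-(n:ℝ)) ∂μ := integral_congr_ae (hFμ n)
    have h2 : ∫ x, max (min (g x) n) (-(n:ℝ)) ∂μ
        = ∫ x, min (max (g x) 0) (n:ℝ) ∂μ + ∫ x, max (min (g x) 0) (-(n:ℝ)) ∂μ := by
      rw [← integral_add (hintmin n) (hintmax n)]
      exact integral_congr_ae (ae_of_all _ (fun x => hsplit n x))
    have h3 : ∫ x, min (g x) 0 ∂μ ≤ ∫ x, max (min (g x) 0) (-(n:ℝ)) ∂μ :=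
      integral_mono hφ (hintmax n) (fun x => le_max_left _ _)
    have h4 := hBn n
    linarith
  -- integrability of the positive part of llr
  have hgplus : Integrable (fun x => max (g x) 0) μ := by
    have hmeas : Measurable fun x => max (g x) 0 := hgmeas.max measurable_const
    refine ⟨hmeas.aestronglyMeasurable, (hasFiniteIntegral_iff_ofReal
      (f := fun x => max (g x) 0) (ae_of_all _ (fun x => le_max_right _ _))).mpr ?_⟩
    have hpt : ∀ x, (⨆ n : ℕ, ENNReal.ofReal (min (max (g x) 0) (n:ℝ)))
        = ENNReal.ofReal (max (g x) 0) := by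
      intro x
      apply le_antisymm
      · exact iSup_le fun n => ENNReal.ofReal_le_ofReal (min_le_left _ _)
      · obtain ⟨n, hn⟩ := exists_nat_ge (max (g x) 0)
        refine le_trans (le_of_eq ?_) (le_iSup
          (fun n : ℕ => ENNReal.ofReal (min (max (g x) 0) (n:ℝ))) n)
        rw [min_eq_left hn]
    calc ∫⁻ x, ENNReal.ofReal (max (g x) 0) ∂μ
        = ∫⁻ x, ⨆ n : ℕ, ENNReal.ofReal (min (max (g x) 0) (n:ℝ)) ∂μ := by
          refine lintegral_congr (fun x => (hpt x).symm)
      _ = ⨆ n : ℕ, ∫⁻ x, ENNReal.ofReal (min (max (g x) 0) (n:ℝ)) ∂μ := by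
          refine lintegral_iSup (fun n => ?_) (fun m n hmn x => ?_)
          · exact ((hgmeas.max measurable_const).min measurable_const).ennreal_ofReal
          · exact ENNReal.ofReal_le_ofReal (min_le_min (le_refl _) (Nat.cast_le.mpr hmn))
      _ ≤ ENNReal.ofReal (c + Real.log 2 - ∫ x, min (g x) 0 ∂μ) := by
          refine iSup_le fun n => ?_
          rw [← ofReal_integral_eq_lintegral_ofReal (hintmin n)
            (ae_of_all _ (fun x => le_min (le_max_right _ _) (Nat.cast_nonneg n)))]
          exact ENNReal.ofReal_le_ofReal (hbound_n n)
      _ < ⊤ := ENNReal.ofReal_lt_top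
  have hg : Integrable g μ := by
    have hsum := hgplus.add hφ
    have hid : ((fun x => max (g x) 0) + fun x => min (g x) 0) = g := by
      funext x; simp only [Pi.add_apply]; rw [max_add_min, add_zero]
    rwa [hid] at hsum
  refine ⟨h, hg, ?_⟩
  -- convergence of ∫ F n dμ to ∫ g dμ
  have hIμ : Tendsto (fun n => ∫ x, F n x ∂μ) atTop (𝓝 (∫ x, g x ∂μ)) := by
    have heq : ∀ n : ℕ, ∫ x, F n x ∂μ = ∫ x, max (min (g x) n) (-(n:ℝ)) ∂μ :=
      fun n => integral_congr_ae (hFμ n)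
    simp_rw [heq]
    refine tendsto_integral_of_dominated_convergence (fun x => |g x|)
      (fun n => ((hgmeas.min measurable_const).max measurable_const).aestronglyMeasurable)
      hg.abs (fun n => ae_of_all _ (fun x => ?_)) (ae_of_all _ (fun x => ?_))
    · rw [Real.norm_eq_abs, abs_le]
      constructor
      · calc -|g x| ≤ min (g x) n := le_min (neg_abs_le _)
              (le_trans (by simp [abs_nonneg]) (Nat.cast_nonneg n))
          _ ≤ max (min (g x) n) (-(n:ℝ)) := le_max_left _ _
      · refine max_le (le_trans (min_le_left _ _) (le_abs_self _)) ?_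
        exact le_trans (by simp [Nat.cast_nonneg n]) (abs_nonneg _)
    · obtain ⟨N, hN⟩ := exists_nat_ge |g x|
      refine tendsto_atTop_of_eventually_const (i₀ := N) (fun n hn => ?_)
      have hb : |g x| ≤ (n:ℝ) := le_trans hN (Nat.cast_le.mpr hn)
      rw [min_eq_left (abs_le.mp hb).2, max_eq_left (abs_le.mp hb).1]
  -- convergence of ∫ exp (F n) dν to 1
  have hIν : Tendsto (fun n => ∫ x, Real.exp (F n x) ∂ν) atTop (𝓝 1) := by
    rw [← hint_r]
    refine tendsto_integral_of_dominated_convergence (fun x => 1 + r x)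
      (fun n => (Real.measurable_exp.comp (hFmeas n)).aestronglyMeasurable)
      ((integrable_const 1).add hrν)
      (fun n => ae_of_all _ (fun x => ?_)) ?_
    · rw [Real.norm_eq_abs, abs_of_pos (Real.exp_pos _)]
      exact hFexp n x
    · filter_upwards [Measure.rnDeriv_lt_top μ ν] with x hx
      by_cases h0 : μ.rnDeriv ν x = 0
      · have hrx : r x = 0 := by simp [hrdef, h0]
        have hFx : ∀ n : ℕ, F n x = -(n:ℝ) := by intro n; rw [hFdef]; simp [h0]
        simp_rw [hFx, hrx]
        exact Real.tendsto_exp_atBot.comp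
          (tendsto_neg_atTop_atBot.comp tendsto_natCast_atTop_atTop)
      · have hrx : 0 < r x := ENNReal.toReal_pos h0 hx.ne
        have hg' : Real.exp (g x) = r x := by rw [hgr, Real.exp_log hrx]
        obtain ⟨N, hN⟩ := exists_nat_ge |g x|
        refine tendsto_atTop_of_eventually_const (i₀ := N) (fun n hn => ?_)
        have hb : |g x| ≤ (n:ℝ) := le_trans hN (Nat.cast_le.mpr hn)
        rw [hFdef]
        simp only [h0, if_false]
        rw [min_eq_left (abs_le.mp hb).2, max_eq_left (abs_le.mp hb).1, hg']
  have hlogten : Tendsto (fun n => Real.log (∫ x, Real.exp (F n x) ∂ν)) atTop (𝓝 0) := by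
    have := hIν.log one_ne_zero
    simpa using this
  have hfinal : Tendsto (fun n => ∫ x, F n x ∂μ - Real.log (∫ x, Real.exp (F n x) ∂ν))
      atTop (𝓝 (∫ x, g x ∂μ)) := by
    simpa using hIμ.sub hlogten
  exact le_of_tendsto hfinal (Eventually.of_forall hBn)

lemma clamp_lipschitz (M a b : ℝ) :
    |max (min a M) (-M) - max (min b M) (-M)| ≤ |a - b| := by
  have h1 : a - b ≤ |a - b| := le_abs_self _
  have h2 : b - a ≤ |a - b| := by rw [abs_sub_comm]; exact le_abs_self _
  rw [abs_sub_le_iff]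
  constructor <;> (simp only [min_def, max_def]; split_ifs <;> linarith)

lemma clamp_eq_self {M a : ℝ} (h : |a| ≤ M) : max (min a M) (-M) = a := by
  rw [min_eq_left (abs_le.mp h).2, max_eq_left (abs_le.mp h).1]

lemma abs_exp_sub_exp {M a b : ℝ} (ha : a ≤ M) (hb : b ≤ M) :
    |Real.exp a - Real.exp b| ≤ Real.exp M * |a - b| := by
  wlog hab : b ≤ a generalizing a b
  · rw [abs_sub_comm, abs_sub_comm a b]; exact this hb ha (le_of_not_ge hab)
  rw [abs_of_nonneg (sub_nonneg.mpr (Real.exp_le_exp.mpr hab)), abs_of_nonneg (sub_nonneg.mpr hab)]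
  have h := Real.add_one_le_exp (b - a)
  have hprod : Real.exp (b - a) * Real.exp a = Real.exp b := by
    rw [← Real.exp_add]; ring_nf
  have key : Real.exp a - Real.exp b ≤ (a - b) * Real.exp a := by
    nlinarith [mul_le_mul_of_nonneg_right h (Real.exp_pos a).le]
  calc Real.exp a - Real.exp b ≤ (a - b) * Real.exp a := key
    _ ≤ Real.exp M * (a - b) := by
        rw [mul_comm]
        exact mul_le_mul_of_nonneg_right (Real.exp_le_exp.mpr ha) (by linarith)

variable [TopologicalSpace X] [PolishSpace X] [BorelSpace X]

variable [TopologicalSpace X] [PolishSpace X] [BorelSpace X]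

lemma measurable_le_of_continuous_le {μ ν : Measure X}
    [IsProbabilityMeasure μ] [IsProbabilityMeasure ν] {c : ℝ}
    (hL : ∀ f : X →ᵇ ℝ, ∫ x, f x ∂μ - Real.log (∫ x, Real.exp (f x) ∂ν) ≤ c)
    (f : X → ℝ) (hf : Measurable f) {M : ℝ} (hM : ∀ x, |f x| ≤ M) :
    ∫ x, f x ∂μ - Real.log (∫ x, Real.exp (f x) ∂ν) ≤ c := by
  letI := TopologicalSpace.upgradeIsCompletelyMetrizable X
  have hMnn : 0 ≤ M := by
    have hne : Nonempty X := by
      by_contra hempty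
      have : μ Set.univ = 0 := by
        rw [Set.univ_eq_empty_iff.mpr (not_nonempty_iff.mp hempty)]; simp
      simp [measure_univ] at this
    exact le_trans (abs_nonneg _) (hM (Classical.arbitrary X))
  -- suffices: for every ε > 0 the bound holds up to (1 + exp (2*M)) * ε
  have key : ∀ ε : ℝ, 0 < ε →
      ∫ x, f x ∂μ - Real.log (∫ x, Real.exp (f x) ∂ν) ≤ c + (1 + Real.exp (2*M)) * ε := by
    intro ε hε
    have hfint : Integrable f (μ + ν) := integrable_of_bounded hf (fun x => hM x)
    obtain ⟨g, hg, hgint⟩ := hfint.exists_boundedContinuous_integral_sub_le hε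
    -- the clamped function
    set G : X → ℝ := fun x => max (min (g x) M) (-M) with hGdef
    have hGcont : Continuous G := ((map_continuous g).min continuous_const).max continuous_const
    have hGbd : ∀ x, ‖G x‖ ≤ M := by
      intro x
      rw [Real.norm_eq_abs, abs_le]
      exact ⟨le_max_right _ _, max_le (min_le_right _ _) (by linarith)⟩
    set G' : X →ᵇ ℝ := BoundedContinuousFunction.ofNormedAddCommGroup G hGcont M hGbd with hG'
    have hGapprox : ∀ x, ‖f x - G x‖ ≤ ‖f x - g x‖ := by
      intro x
      rw [Real.norm_eq_abs, Real.norm_eq_abs, abs_sub_comm, abs_sub_comm (f x)]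
      calc |G x - f x| = |max (min (g x) M) (-M) - max (min (f x) M) (-M)| := by
            rw [clamp_eq_self (hM x)]
        _ ≤ |g x - f x| := clamp_lipschitz M _ _
    -- integral bounds on both measures
    have hdiff_int : Integrable (fun x => ‖f x - g x‖) (μ + ν) := (hfint.sub hgint).norm
    have hμle : ∫ x, ‖f x - G x‖ ∂μ ≤ ε := by
      calc ∫ x, ‖f x - G x‖ ∂μ ≤ ∫ x, ‖f x - g x‖ ∂μ := by
            refine integral_mono ?_ (hdiff_int.mono_measure (Measure.le_add_right le_rfl)) hGapprox
            exact ((integrable_of_bounded hf (fun x => hM x)).sub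
              (integrable_of_bounded hGcont.measurable hGbd)).norm
        _ ≤ ∫ x, ‖f x - g x‖ ∂(μ + ν) :=
            integral_mono_measure (Measure.le_add_right le_rfl)
              (ae_of_all _ (fun x => norm_nonneg _)) hdiff_int
        _ ≤ ε := hg
    have hνle : ∫ x, ‖f x - G x‖ ∂ν ≤ ε := by
      calc ∫ x, ‖f x - G x‖ ∂ν ≤ ∫ x, ‖f x - g x‖ ∂ν := by
            refine integral_mono ?_ (hdiff_int.mono_measure (Measure.le_add_left le_rfl)) hGapprox
            exact ((integrable_of_bounded hf (fun x => hM x)).sub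
              (integrable_of_bounded hGcont.measurable hGbd)).norm
        _ ≤ ∫ x, ‖f x - g x‖ ∂(μ + ν) :=
            integral_mono_measure (Measure.le_add_left le_rfl)
              (ae_of_all _ (fun x => norm_nonneg _)) hdiff_int
        _ ≤ ε := hg
    -- compare the two functionals
    have hfintμ : Integrable f μ := integrable_of_bounded hf (fun x => hM x)
    have hGintμ : Integrable G μ := integrable_of_bounded hGcont.measurable hGbd
    have hstep1 : ∫ x, f x ∂μ ≤ ∫ x, G x ∂μ + ε := by
      have : ∫ x, f x ∂μ - ∫ x, G x ∂μ = ∫ x, (f x - G x) ∂μ := (integral_sub hfintμ hGintμ).symm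
      have h2 : ∫ x, (f x - G x) ∂μ ≤ ∫ x, ‖f x - G x‖ ∂μ :=
        integral_mono (hfintμ.sub hGintμ) (hfintμ.sub hGintμ).norm
          (fun x => le_abs_self _)
      linarith
    -- exponential integrals
    have hexpf_int : Integrable (fun x => Real.exp (f x)) ν := by
      refine integrable_of_bounded (Real.measurable_exp.comp hf) (M := Real.exp M) (fun x => ?_)
      rw [Real.norm_eq_abs, abs_of_pos (Real.exp_pos _)]
      exact Real.exp_le_exp.mpr (abs_le.mp (hM x)).2
    have hexpG_int : Integrable (fun x => Real.exp (G x)) ν := by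
      refine integrable_of_bounded (Real.measurable_exp.comp hGcont.measurable)
        (M := Real.exp M) (fun x => ?_)
      rw [Real.norm_eq_abs, abs_of_pos (Real.exp_pos _)]
      exact Real.exp_le_exp.mpr (abs_le.mp (hGbd x)).2
    have hA : Real.exp (-M) ≤ ∫ x, Real.exp (f x) ∂ν := by
      calc Real.exp (-M) = ∫ _, Real.exp (-M) ∂ν := by simp [measure_univ]
        _ ≤ ∫ x, Real.exp (f x) ∂ν :=
            integral_mono (integrable_const _) hexpf_int
              (fun x => Real.exp_le_exp.mpr (abs_le.mp (hM x)).1)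
    have hdiffexp : |∫ x, Real.exp (G x) ∂ν - ∫ x, Real.exp (f x) ∂ν| ≤ Real.exp M * ε := by
      calc |∫ x, Real.exp (G x) ∂ν - ∫ x, Real.exp (f x) ∂ν|
          = |∫ x, (Real.exp (G x) - Real.exp (f x)) ∂ν| := by
            rw [integral_sub hexpG_int hexpf_int]
        _ = ‖∫ x, (Real.exp (G x) - Real.exp (f x)) ∂ν‖ := (Real.norm_eq_abs _).symm
        _ ≤ ∫ x, ‖Real.exp (G x) - Real.exp (f x)‖ ∂ν := norm_integral_le_integral_norm _
        _ = ∫ x, |Real.exp (G x) - Real.exp (f x)| ∂ν := by simp [Real.norm_eq_abs]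
        _ ≤ ∫ x, Real.exp M * ‖f x - G x‖ ∂ν := by
            refine integral_mono (hexpG_int.sub hexpf_int).abs ?_ (fun x => ?_)
            · exact ((integrable_of_bounded hf (fun x => hM x) (μ := ν)).sub
                (integrable_of_bounded hGcont.measurable hGbd)).norm.const_mul _
            · rw [Real.norm_eq_abs, abs_sub_comm (f x)]
              exact abs_exp_sub_exp (abs_le.mp (hGbd x)).2 (abs_le.mp (hM x)).2
        _ = Real.exp M * ∫ x, ‖f x - G x‖ ∂ν := by rw [integral_const_mul]
        _ ≤ Real.exp M * ε := by
            refine mul_le_mul_of_nonneg_left hνle (Real.exp_pos _).le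
    have hApos : 0 < ∫ x, Real.exp (f x) ∂ν := lt_of_lt_of_le (Real.exp_pos _) hA
    have hBpos : 0 < ∫ x, Real.exp (G x) ∂ν := integral_exp_pos hexpG_int
    have hlogdiff : Real.log (∫ x, Real.exp (f x) ∂ν) - Real.log (∫ x, Real.exp (G x) ∂ν)
        ≥ - (Real.exp (2*M) * ε) := by
      have h1 : Real.log (∫ x, Real.exp (G x) ∂ν) - Real.log (∫ x, Real.exp (f x) ∂ν)
          ≤ Real.exp (2*M) * ε := by
        rw [← Real.log_div hBpos.ne' hApos.ne']
        calc Real.log ((∫ x, Real.exp (G x) ∂ν) / (∫ x, Real.exp (f x) ∂ν))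
            ≤ (∫ x, Real.exp (G x) ∂ν) / (∫ x, Real.exp (f x) ∂ν) - 1 :=
              Real.log_le_sub_one_of_pos (div_pos hBpos hApos)
          _ = ((∫ x, Real.exp (G x) ∂ν) - ∫ x, Real.exp (f x) ∂ν) / (∫ x, Real.exp (f x) ∂ν) := by
              field_simp
          _ ≤ (Real.exp M * ε) / Real.exp (-M) := by
              refine div_le_div₀ (by positivity) (le_trans (le_abs_self _) hdiffexp)
                (Real.exp_pos _) hA
          _ = Real.exp (2*M) * ε := by
              rw [div_eq_mul_inv, ← Real.exp_neg, neg_neg]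
              rw [mul_assoc, mul_comm ε (Real.exp M), ← mul_assoc, ← Real.exp_add]
              ring_nf
      linarith
    have hG'le := hL G'
    have hG'eq : ∀ x, G' x = G x := fun x => rfl
    simp only [hG'eq] at hG'le
    linarith
  by_contra hcon
  push_neg at hcon
  set δ := (∫ x, f x ∂μ - Real.log (∫ x, Real.exp (f x) ∂ν)) - c with hδ
  have hδpos : 0 < δ := by linarith
  have hpos : 0 < 1 + Real.exp (2*M) := by positivity
  have hthis := key (δ / (2 * (1 + Real.exp (2*M)))) (by positivity)
  have heq : (1 + Real.exp (2*M)) * (δ / (2 * (1 + Real.exp (2*M)))) = δ / 2 := by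
    field_simp
  rw [heq] at hthis
  linarith

end KLAux

theorem kl_lowerSemicontinuous {X : Type*} [MeasurableSpace X] [TopologicalSpace X]
    [PolishSpace X] [BorelSpace X]
    (μs νs : ℕ → ProbabilityMeasure X) (μ ν : ProbabilityMeasure X)
    (hμ : Tendsto μs atTop (𝓝 μ)) (hν : Tendsto νs atTop (𝓝 ν)) :
    klDiv μ.toMeasure ν.toMeasure ≤
      liminf (fun n => klDiv (μs n).toMeasure (νs n).toMeasure) atTop := by
  set L : EReal := liminf (fun n => klDiv (μs n).toMeasure (νs n).toMeasure) atTop with hLdef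
  -- klDiv dominates the Donsker-Varadhan functional (for bounded measurable f)
  have hgibbs : ∀ (α β : ProbabilityMeasure X) (f : X → ℝ), Measurable f →
      (∃ M, ∀ x, |f x| ≤ M) →
      ((∫ x, f x ∂α.toMeasure - Real.log (∫ x, Real.exp (f x) ∂β.toMeasure) : ℝ) : EReal)
        ≤ klDiv α.toMeasure β.toMeasure := by
    intro α β f hf ⟨M, hM⟩
    rw [klDiv]
    split_ifs with hcond
    · rw [EReal.coe_le_coe_iff]
      exact KLAux.gibbs hcond.1 hcond.2 hf hM
    · exact le_top
  -- for bounded continuous f, the DV functional at the limit is at most L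
  have hBle : ∀ f : X →ᵇ ℝ,
      ((∫ x, f x ∂μ.toMeasure - Real.log (∫ x, Real.exp (f x) ∂ν.toMeasure) : ℝ) : EReal) ≤ L := by
    intro f
    -- bounded continuous exp ∘ f
    set ef : X →ᵇ ℝ := BoundedContinuousFunction.ofNormedAddCommGroup
      (fun x => Real.exp (f x)) (Real.continuous_exp.comp f.continuous) (Real.exp ‖f‖)
      (fun x => by
        rw [Real.norm_eq_abs, abs_of_pos (Real.exp_pos _)]
        exact Real.exp_le_exp.mpr (le_trans (le_abs_self _)
          (by rw [← Real.norm_eq_abs]; exact f.norm_coe_le_norm x))) with hef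
    have h1 : Tendsto (fun n => ∫ x, f x ∂(μs n).toMeasure) atTop
        (𝓝 (∫ x, f x ∂μ.toMeasure)) :=
      ProbabilityMeasure.tendsto_iff_forall_integral_tendsto.mp hμ f
    have h2 : Tendsto (fun n => ∫ x, Real.exp (f x) ∂(νs n).toMeasure) atTop
        (𝓝 (∫ x, Real.exp (f x) ∂ν.toMeasure)) := by
      have := ProbabilityMeasure.tendsto_iff_forall_integral_tendsto.mp hν ef
      simpa [hef] using this
    have hexp_int : Integrable (fun x => Real.exp (f x)) ν.toMeasure :=
      KLAux.integrable_exp_of_bounded f.continuous.measurable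
        (fun x => by rw [← Real.norm_eq_abs]; exact f.norm_coe_le_norm x)
    have hpos : 0 < ∫ x, Real.exp (f x) ∂ν.toMeasure := integral_exp_pos hexp_int
    have h3 : Tendsto (fun n => Real.log (∫ x, Real.exp (f x) ∂(νs n).toMeasure)) atTop
        (𝓝 (Real.log (∫ x, Real.exp (f x) ∂ν.toMeasure))) := h2.log hpos.ne'
    have h4 : Tendsto (fun n => ((∫ x, f x ∂(μs n).toMeasure
        - Real.log (∫ x, Real.exp (f x) ∂(νs n).toMeasure) : ℝ) : EReal)) atTop
        (𝓝 ((∫ x, f x ∂μ.toMeasure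
          - Real.log (∫ x, Real.exp (f x) ∂ν.toMeasure) : ℝ) : EReal)) :=
      EReal.tendsto_coe.mpr (h1.sub h3)
    have h5 : ((∫ x, f x ∂μ.toMeasure
        - Real.log (∫ x, Real.exp (f x) ∂ν.toMeasure) : ℝ) : EReal)
        = liminf (fun n => ((∫ x, f x ∂(μs n).toMeasure
          - Real.log (∫ x, Real.exp (f x) ∂(νs n).toMeasure) : ℝ) : EReal)) atTop :=
      h4.liminf_eq.symm
    rw [h5, hLdef]
    refine liminf_le_liminf (Eventually.of_forall (fun n => ?_))
    exact hgibbs (μs n) (νs n) f f.continuous.measurable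
      ⟨‖f‖, fun x => by rw [← Real.norm_eq_abs]; exact f.norm_coe_le_norm x⟩
  -- L is nonnegative, handle the top case
  have hL0 : (0 : EReal) ≤ L := by
    have := hBle 0
    simpa using this
  by_cases hLtop : L = ⊤
  · rw [hLtop]; exact le_top
  -- L is a real number
  have hLbot : L ≠ ⊥ := fun h => by simp [h] at hL0
  set c : ℝ := L.toReal with hc
  have hLc : L = (c : EReal) := (EReal.coe_toReal hLtop hLbot).symm
  have hcont : ∀ f : X →ᵇ ℝ,
      ∫ x, f x ∂μ.toMeasure - Real.log (∫ x, Real.exp (f x) ∂ν.toMeasure) ≤ c := by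
    intro f
    have := hBle f
    rw [hLc, EReal.coe_le_coe_iff] at this
    exact this
  have hmeas : ∀ f : X → ℝ, Measurable f → (∃ M, ∀ x, |f x| ≤ M) →
      ∫ x, f x ∂μ.toMeasure - Real.log (∫ x, Real.exp (f x) ∂ν.toMeasure) ≤ c := by
    intro f hf ⟨M, hM⟩
    exact KLAux.measurable_le_of_continuous_le hcont f hf hM
  obtain ⟨hac, hint, hle⟩ := KLAux.converse hmeas
  rw [klDiv, if_pos ⟨hac, hint⟩, hLc, EReal.coe_le_coe_iff]
  exact hle
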